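/- For every integer p ≥ 1 and every n ≥ 1, every eigenvalue λ ∈ ℝ of the adjacency matrix A_n of the n-th Schreier graph of 𝒢_{S_p} satisfies −2 ≤ λ ≤ 2p. -/

import Mathlib

open Polynomial Matrix

/-- The action of the generator `e_i` of the star automaton group `𝒢_{S_p}` on
words of length `n` over the alphabet `X = {0, 1, …, p}`. -/
def starWord (p : ℕ) (i : Fin (p + 1)) : (n : ℕ) → (Fin n → Fin (p + 1)) → Fin n → Fin (p + 1)
  | 0, w => w
  | n + 1, w =>
    if w 0 = 0 then Fin.cons i (starWord p i n (Fin.tail w))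
    else if w 0 = i then Fin.cons 0 (Fin.tail w)
    else w

/-- The real permutation matrix of `e_i^{(n)}`. -/
noncomputable def starMat (p n : ℕ) (i : Fin (p + 1)) :
    Matrix (Fin n → Fin (p + 1)) (Fin n → Fin (p + 1)) ℝ :=
  fun u v => if starWord p i n u = v then 1 else 0

/-- The adjacency matrix `A_n = Σ_{i=1}^p (M_{i,n} + M_{i,n}ᵀ)` of the `n`-th
Schreier graph of the star automaton group `𝒢_{S_p}`. -/
noncomputable def starAdj (p n : ℕ) :
    Matrix (Fin n → Fin (p + 1)) (Fin n → Fin (p + 1)) ℝ :=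
  ∑ i : Fin p, (starMat p n i.succ + (starMat p n i.succ)ᵀ)

/-! ### Auxiliary material -/

/-- Explicit inverse of the action `starWord`. -/
def starInv (p : ℕ) (i : Fin (p + 1)) : (n : ℕ) → (Fin n → Fin (p + 1)) → Fin n → Fin (p + 1)
  | 0, w => w
  | n + 1, w =>
    if w 0 = i then Fin.cons 0 (starInv p i n (Fin.tail w))
    else if w 0 = 0 then Fin.cons i (Fin.tail w)
    else w

lemma starWord_zero_cons (p : ℕ) (i : Fin (p + 1)) (n : ℕ) (t : Fin n → Fin (p + 1)) :
    starWord p i (n + 1) (Fin.cons 0 t) = Fin.cons i (starWord p i n t) := by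
  simp [starWord, Fin.tail_cons]

lemma starWord_self_cons (p : ℕ) (i : Fin (p + 1)) (hi : i ≠ 0) (n : ℕ)
    (t : Fin n → Fin (p + 1)) :
    starWord p i (n + 1) (Fin.cons i t) = Fin.cons 0 t := by
  simp [starWord, Fin.tail_cons, hi]

lemma starWord_other_cons (p : ℕ) (i a : Fin (p + 1)) (ha0 : a ≠ 0) (hai : a ≠ i) (n : ℕ)
    (t : Fin n → Fin (p + 1)) :
    starWord p i (n + 1) (Fin.cons a t) = Fin.cons a t := by
  simp [starWord, Fin.tail_cons, ha0, hai]

lemma starInv_self_cons (p : ℕ) (i : Fin (p + 1)) (n : ℕ) (t : Fin n → Fin (p + 1)) :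
    starInv p i (n + 1) (Fin.cons i t) = Fin.cons 0 (starInv p i n t) := by
  simp [starInv, Fin.tail_cons]

lemma starInv_zero_cons (p : ℕ) (i : Fin (p + 1)) (hi : i ≠ 0) (n : ℕ)
    (t : Fin n → Fin (p + 1)) :
    starInv p i (n + 1) (Fin.cons 0 t) = Fin.cons i t := by
  simp [starInv, Fin.tail_cons, Ne.symm hi]

lemma starInv_other_cons (p : ℕ) (i a : Fin (p + 1)) (ha0 : a ≠ 0) (hai : a ≠ i) (n : ℕ)
    (t : Fin n → Fin (p + 1)) :
    starInv p i (n + 1) (Fin.cons a t) = Fin.cons a t := by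
  simp [starInv, Fin.tail_cons, ha0, hai]

lemma starInv_starWord (p : ℕ) (i : Fin (p + 1)) (hi : i ≠ 0) (n : ℕ)
    (w : Fin n → Fin (p + 1)) : starInv p i n (starWord p i n w) = w := by
  induction n with
  | zero => rfl
  | succ n ih =>
    rw [← Fin.cons_self_tail w]
    rcases eq_or_ne (w 0) 0 with h0 | h0
    · rw [h0, starWord_zero_cons, starInv_self_cons, ih]
    · rcases eq_or_ne (w 0) i with h1 | h1
      · rw [h1, starWord_self_cons p i hi, starInv_zero_cons p i hi]
      · rw [starWord_other_cons p i (w 0) h0 h1, starInv_other_cons p i (w 0) h0 h1]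

lemma starWord_starInv (p : ℕ) (i : Fin (p + 1)) (hi : i ≠ 0) (n : ℕ)
    (w : Fin n → Fin (p + 1)) : starWord p i n (starInv p i n w) = w := by
  induction n with
  | zero => rfl
  | succ n ih =>
    rw [← Fin.cons_self_tail w]
    rcases eq_or_ne (w 0) i with h1 | h1
    · rw [h1, starInv_self_cons, starWord_zero_cons, ih]
    · rcases eq_or_ne (w 0) 0 with h0 | h0
      · rw [h0, starInv_zero_cons p i hi, starWord_self_cons p i hi]
      · rw [starInv_other_cons p i (w 0) h0 h1, starWord_other_cons p i (w 0) h0 h1]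

lemma starWord_bijective (p : ℕ) (i : Fin (p + 1)) (hi : i ≠ 0) (n : ℕ) :
    Function.Bijective (starWord p i n) :=
  Function.bijective_iff_has_inverse.2
    ⟨starInv p i n, fun w => starInv_starWord p i hi n w,
      fun w => starWord_starInv p i hi n w⟩

/-- The basic quadratic form `F p n x = ∑ i ∑ u x u * x (e_{i+1} u)`. -/
noncomputable def starF (p n : ℕ) (x : (Fin n → Fin (p + 1)) → ℝ) : ℝ :=
  ∑ i : Fin p, ∑ u : Fin n → Fin (p + 1), x u * x (starWord p i.succ n u)

/-- One permutation term of the form is bounded by the sum of squares. -/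
lemma perm_form_le {α : Type*} [Fintype α] (σ : α → α) (hσ : Function.Bijective σ)
    (x : α → ℝ) : ∑ u, x u * x (σ u) ≤ ∑ u, (x u) ^ 2 := by
  have h2 : (2 : ℝ) * ∑ u, x u * x (σ u) ≤ ∑ u, (x u) ^ 2 + ∑ u, (x (σ u)) ^ 2 := by
    rw [Finset.mul_sum, ← Finset.sum_add_distrib]
    exact Finset.sum_le_sum fun u _ => by nlinarith [sq_nonneg (x u - x (σ u))]
  have heq : ∑ u, (x (σ u)) ^ 2 = ∑ u, (x u) ^ 2 :=
    Fintype.sum_bijective σ hσ _ _ fun u => rfl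
  rw [heq] at h2
  linarith

lemma neg_perm_form_le {α : Type*} [Fintype α] (σ : α → α) (hσ : Function.Bijective σ)
    (x : α → ℝ) : -(∑ u, (x u) ^ 2) ≤ ∑ u, x u * x (σ u) := by
  have h2 : -(∑ u, (x u) ^ 2 + ∑ u, (x (σ u)) ^ 2) ≤ (2 : ℝ) * ∑ u, x u * x (σ u) := by
    rw [Finset.mul_sum, ← Finset.sum_add_distrib, ← Finset.sum_neg_distrib]
    exact Finset.sum_le_sum fun u _ => by nlinarith [sq_nonneg (x u + x (σ u))]
  have heq : ∑ u, (x (σ u)) ^ 2 = ∑ u, (x u) ^ 2 :=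
    Fintype.sum_bijective σ hσ _ _ fun u => rfl
  rw [heq] at h2
  linarith

lemma starF_le (p n : ℕ) (x : (Fin n → Fin (p + 1)) → ℝ) :
    starF p n x ≤ p * ∑ u, (x u) ^ 2 := by
  calc starF p n x ≤ ∑ _i : Fin p, ∑ u, (x u) ^ 2 :=
        Finset.sum_le_sum fun i _ =>
          perm_form_le _ (starWord_bijective p i.succ (Fin.succ_ne_zero i) n) x
    _ = p * ∑ u, (x u) ^ 2 := by simp [Finset.sum_const, mul_comm]

lemma neg_starF_le (p n : ℕ) (x : (Fin n → Fin (p + 1)) → ℝ) :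
    -(p * ∑ u, (x u) ^ 2) ≤ starF p n x := by
  have : ∑ _i : Fin p, -(∑ u, (x u) ^ 2) ≤ starF p n x :=
    Finset.sum_le_sum fun i _ =>
      neg_perm_form_le _ (starWord_bijective p i.succ (Fin.succ_ne_zero i) n) x
  simpa [Finset.sum_const, mul_comm] using this

/-- Sum over words of length `n+1` as a double sum over the first letter and the tail. -/
lemma sum_cons (p n : ℕ) (f : (Fin (n + 1) → Fin (p + 1)) → ℝ) :
    ∑ u : Fin (n + 1) → Fin (p + 1), f u
      = ∑ a : Fin (p + 1), ∑ t : Fin n → Fin (p + 1), f (Fin.cons a t) := by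
  rw [← (Fin.consEquiv (fun _ : Fin (n + 1) => Fin (p + 1))).sum_comp f]
  rw [Fintype.sum_prod_type]
  rfl

lemma dotProduct_sum' {ι V : Type*} [Fintype ι] [Fintype V] (v : V → ℝ) (f : ι → V → ℝ) :
    v ⬝ᵥ (∑ i, f i) = ∑ i, v ⬝ᵥ f i := by
  unfold dotProduct
  simp only [Finset.sum_apply, Finset.mul_sum]
  rw [Finset.sum_comm]

lemma matrix_sum_mulVec {ι V : Type*} [Fintype ι] [Fintype V] [DecidableEq V]
    (M : ι → Matrix V V ℝ) (v : V → ℝ) :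
    (∑ i, M i) *ᵥ v = ∑ i, (M i) *ᵥ v := by
  ext u
  simp only [Matrix.mulVec, dotProduct, Finset.sum_apply, Matrix.sum_apply, Finset.sum_mul]
  rw [Finset.sum_comm]

/-- The dot product against the adjacency matrix is twice the basic form. -/
lemma dot_starAdj (p n : ℕ) (v : (Fin n → Fin (p + 1)) → ℝ) :
    v ⬝ᵥ (starAdj p n).mulVec v = 2 * starF p n v := by
  have hM : ∀ i : Fin p, v ⬝ᵥ (starMat p n i.succ).mulVec v
      = ∑ u, v u * v (starWord p i.succ n u) := by
    intro i
    unfold starMat dotProduct mulVec dotProduct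
    refine Finset.sum_congr rfl fun u _ => ?_
    simp [Finset.mul_sum, mul_ite, ite_mul]
  have hMT : ∀ i : Fin p, v ⬝ᵥ ((starMat p n i.succ)ᵀ).mulVec v
      = ∑ u, v u * v (starWord p i.succ n u) := by
    intro i
    unfold starMat transpose dotProduct mulVec dotProduct
    simp only [Matrix.of_apply, Finset.mul_sum]
    rw [Finset.sum_comm]
    refine Finset.sum_congr rfl fun w _ => ?_
    simp [mul_ite, ite_mul, mul_comm]
  unfold starAdj
  rw [matrix_sum_mulVec, dotProduct_sum']
  unfold starF
  rw [Finset.mul_sum]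
  refine Finset.sum_congr rfl fun i _ => ?_
  rw [Matrix.add_mulVec, dotProduct_add, hM i, hMT i]
  ring

/-- The key sum-of-squares identity relating level `n+1` to level `n`. -/
lemma star_identity (p n : ℕ) (x : (Fin (n + 1) → Fin (p + 1)) → ℝ) :
    4 * p * (starF p (n + 1) x + ∑ u, (x u) ^ 2)
      = (∑ i : Fin p, ∑ t : Fin n → Fin (p + 1),
          (2 * p * x (Fin.cons i.succ (starWord p i.succ n t))
            + x (Fin.cons 0 (starWord p i.succ n t)) + x (Fin.cons 0 t)) ^ 2)
        + 2 * (p * (∑ t, (x (Fin.cons 0 t)) ^ 2)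
            - starF p n (fun t => x (Fin.cons (0 : Fin (p + 1)) t))) := by
  set y : (Fin n → Fin (p + 1)) → ℝ := fun t => x (Fin.cons 0 t) with hy
  set Z : ℝ := ∑ t, (y t) ^ 2 with hZ
  set Q : Fin p → ℝ := fun i => ∑ t, (x (Fin.cons i.succ t)) ^ 2 with hQ
  set C : Fin p → ℝ := fun i => ∑ t, y t * x (Fin.cons i.succ (starWord p i.succ n t)) with hC
  set D : Fin p → ℝ := fun i => ∑ t, x (Fin.cons i.succ t) * y t with hD
  set G : Fin p → ℝ := fun i => ∑ t, y t * y (starWord p i.succ n t) with hG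
  set P : ℝ := ∑ i : Fin p, Q i with hP
  have hbij : ∀ i : Fin p, Function.Bijective (starWord p i.succ n) := fun i =>
    starWord_bijective p i.succ (Fin.succ_ne_zero i) n
  -- total sum of squares at level n+1
  have hsq : ∑ u, (x u) ^ 2 = Z + P := by
    rw [sum_cons p n (fun u => (x u) ^ 2), Fin.sum_univ_succ]
  -- the form at level n+1
  have hF : starF p (n + 1) x = (∑ i : Fin p, (C i + D i)) + (p - 1 : ℝ) * P := by
    unfold starF
    have hterm : ∀ i : Fin p,
        ∑ u : Fin (n + 1) → Fin (p + 1), x u * x (starWord p i.succ (n + 1) u)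
          = C i + D i + (P - Q i) := by
      intro i
      rw [sum_cons p n (fun u => x u * x (starWord p i.succ (n + 1) u)), Fin.sum_univ_succ]
      have h0 : ∑ t : Fin n → Fin (p + 1),
          x (Fin.cons 0 t) * x (starWord p i.succ (n + 1) (Fin.cons 0 t)) = C i := by
        refine Finset.sum_congr rfl fun t _ => ?_
        rw [starWord_zero_cons]
      have hb : ∀ b : Fin p, ∑ t : Fin n → Fin (p + 1),
          x (Fin.cons b.succ t) * x (starWord p i.succ (n + 1) (Fin.cons b.succ t))
            = if b = i then D i else Q b := by
        intro b
        rcases eq_or_ne b i with hbi | hbi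
        · subst hbi
          rw [if_pos rfl]
          refine Finset.sum_congr rfl fun t _ => ?_
          rw [starWord_self_cons p b.succ (Fin.succ_ne_zero b)]
        · rw [if_neg hbi]
          refine Finset.sum_congr rfl fun t _ => ?_
          rw [starWord_other_cons p i.succ b.succ (Fin.succ_ne_zero b)
            (by simpa [Fin.succ_inj] using hbi)]
          ring
        -- end
      rw [h0]
      have : ∑ b : Fin p, ∑ t : Fin n → Fin (p + 1),
          x (Fin.cons b.succ t) * x (starWord p i.succ (n + 1) (Fin.cons b.succ t))
            = ∑ b : Fin p, if b = i then D i else Q b := by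
        exact Finset.sum_congr rfl fun b _ => hb b
      rw [this]
      have hsplit : ∑ b : Fin p, (if b = i then D i else Q b)
          = D i + (P - Q i) := by
        have : ∀ b : Fin p, (if b = i then D i else Q b)
            = Q b + (if b = i then D i - Q i else 0) := by
          intro b
          rcases eq_or_ne b i with hbi | hbi
          · subst hbi; simp
          · simp [hbi]
        rw [Finset.sum_congr rfl fun b _ => this b, Finset.sum_add_distrib,
          Finset.sum_ite_eq' Finset.univ i (fun _ => D i - Q i)]
        simp [hP]
        ring
      rw [hsplit]
      ring
    rw [Finset.sum_congr rfl fun i _ => hterm i, Finset.sum_add_distrib,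
      Finset.sum_sub_distrib]
    simp only [Finset.sum_const, Finset.card_univ, Fintype.card_fin, nsmul_eq_mul, ← hP]
    ring
  -- the squares term
  have hsqterm : ∀ i : Fin p, ∑ t : Fin n → Fin (p + 1),
      (2 * p * x (Fin.cons i.succ (starWord p i.succ n t))
        + x (Fin.cons 0 (starWord p i.succ n t)) + x (Fin.cons 0 t)) ^ 2
      = 4 * p ^ 2 * Q i + 2 * Z + 4 * p * D i + 4 * p * C i + 2 * G i := by
    intro i
    have hexp : ∀ t : Fin n → Fin (p + 1),
        (2 * p * x (Fin.cons i.succ (starWord p i.succ n t))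
          + x (Fin.cons 0 (starWord p i.succ n t)) + x (Fin.cons 0 t)) ^ 2
        = 4 * p ^ 2 * (x (Fin.cons i.succ (starWord p i.succ n t))) ^ 2
          + (y (starWord p i.succ n t)) ^ 2 + (y t) ^ 2
          + 4 * p * (x (Fin.cons i.succ (starWord p i.succ n t)) * y (starWord p i.succ n t))
          + 4 * p * (y t * x (Fin.cons i.succ (starWord p i.succ n t)))
          + 2 * (y t * y (starWord p i.succ n t)) := by
      intro t
      simp only [hy]
      ring
    rw [Finset.sum_congr rfl fun t _ => hexp t]
    repeat rw [Finset.sum_add_distrib]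
    have e1 : ∑ t, 4 * (p:ℝ) ^ 2 * (x (Fin.cons i.succ (starWord p i.succ n t))) ^ 2
        = 4 * p ^ 2 * Q i := by
      rw [← Finset.mul_sum, hQ]
      congr 1
      exact Fintype.sum_bijective _ (hbij i) _ _ fun t => rfl
    have e2 : ∑ t, (y (starWord p i.succ n t)) ^ 2 = Z := by
      rw [hZ]
      exact Fintype.sum_bijective _ (hbij i) _ _ fun t => rfl
    have e3 : ∑ t, 4 * (p:ℝ) * (x (Fin.cons i.succ (starWord p i.succ n t))
        * y (starWord p i.succ n t)) = 4 * p * D i := by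
      rw [← Finset.mul_sum, hD]
      congr 1
      exact Fintype.sum_bijective _ (hbij i) _ _ fun t => rfl
    have e4 : ∑ t, 4 * (p:ℝ) * (y t * x (Fin.cons i.succ (starWord p i.succ n t)))
        = 4 * p * C i := by
      rw [← Finset.mul_sum, hC]
    have e5 : ∑ t, 2 * (y t * y (starWord p i.succ n t)) = 2 * G i := by
      rw [← Finset.mul_sum, hG]
    rw [e1, e2, e3, e4, e5, hZ]
    ring
  have hFm : starF p n y = ∑ i : Fin p, G i := rfl
  rw [hsq, hF, Finset.sum_congr rfl fun i _ => hsqterm i, hFm]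
  repeat rw [Finset.sum_add_distrib]
  simp only [← Finset.mul_sum, ← hP, Finset.sum_const, Finset.card_univ, Fintype.card_fin,
    nsmul_eq_mul, Finset.sum_add_distrib]
  ring

/-- For every `p ≥ 1` and `n ≥ 1`, every real eigenvalue `λ` of the adjacency matrix `A_n`
of the `n`-th Schreier graph of `𝒢_{S_p}` satisfies `−2 ≤ λ ≤ 2p`. -/
theorem stmt9 (p : ℕ) (hp : 1 ≤ p) (n : ℕ) (hn : 1 ≤ n) (lam : ℝ)
    (h : ∃ v : (Fin n → Fin (p + 1)) → ℝ, v ≠ 0 ∧ (starAdj p n).mulVec v = lam • v) :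
    -2 ≤ lam ∧ lam ≤ 2 * p := by
  obtain ⟨v, hv0, heig⟩ := h
  set E : ℝ := ∑ u, (v u) ^ 2 with hE
  have hEpos : 0 < E := by
    obtain ⟨u, hu⟩ := Function.ne_iff.1 hv0
    refine Finset.sum_pos' (fun w _ => sq_nonneg _) ⟨u, Finset.mem_univ u, ?_⟩
    calc (0:ℝ) < |v u| ^ 2 := pow_pos (abs_pos.2 hu) 2
      _ = (v u) ^ 2 := sq_abs _
  have hdot : v ⬝ᵥ (starAdj p n).mulVec v = lam * E := by
    rw [heig]
    unfold dotProduct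
    rw [hE, Finset.mul_sum]
    refine Finset.sum_congr rfl fun u _ => ?_
    simp [Pi.smul_apply, smul_eq_mul]
    ring
  have hdot2 : lam * E = 2 * starF p n v := by rw [← hdot, dot_starAdj]
  constructor
  · -- lower bound via the identity
    obtain ⟨m, rfl⟩ : ∃ m, n = m + 1 := ⟨n - 1, (Nat.succ_pred_eq_of_pos hn).symm⟩
    have hid := star_identity p m v
    have hsqs : 0 ≤ ∑ i : Fin p, ∑ t : Fin m → Fin (p + 1),
        (2 * p * v (Fin.cons i.succ (starWord p i.succ m t))
          + v (Fin.cons 0 (starWord p i.succ m t)) + v (Fin.cons 0 t)) ^ 2 :=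
      Finset.sum_nonneg fun i _ => Finset.sum_nonneg fun t _ => sq_nonneg _
    have hFm := starF_le p m (fun t => v (Fin.cons (0 : Fin (p + 1)) t))
    have hineq : 0 ≤ 4 * (p : ℝ) * (starF p (m + 1) v + E) := by
      rw [hE, hid]
      linarith
    have hppos : (0 : ℝ) < 4 * p := by positivity
    have hFE : -E ≤ starF p (m + 1) v := by nlinarith
    have : -2 * E ≤ lam * E := by
      rw [hdot2]
      linarith
    have := (mul_le_mul_iff_of_pos_right hEpos).1 this
    linarith
  · -- upper bound
    have hF := starF_le p n v
    have : lam * E ≤ 2 * p * E := by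
      rw [hdot2, hE]
      linarith
    exact (mul_le_mul_iff_of_pos_right hEpos).1 this
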